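/- The limit as x → 0⁺ of (B(x) − A(x))/x^5 equals 3/2^17; in particular the constant 3/2^17 in the lower bound 3/2^17·x^5 < B(x) − A(x) is optimal (cannot be replaced by any larger constant). -/

import Mathlib

open Real Filter

/-- The series `B(x) = ∑ ((1/(2n-1))·(1/4ⁿ)·C(2n,n))²·xⁿ`. -/
noncomputable def Bfun (x : ℝ) : ℝ :=
  ∑' n : ℕ, ((1 / (2 * (n : ℝ) - 1)) * (1 / 4 ^ n) * (Nat.choose (2 * n) n)) ^ 2 * x ^ n

/-- The function `A(x) = 1 + 3x/(10 + √(4 - 3x))`. -/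
noncomputable def Afun (x : ℝ) : ℝ := 1 + 3 * x / (10 + Real.sqrt (4 - 3 * x))

noncomputable def P4 (x : ℝ) : ℝ := 1 + x/4 + x^2/64 + x^3/256 + 25*x^4/16384

noncomputable def Vp (x : ℝ) : ℝ := 1/4 + x/64 + x^2/256 + 25*x^3/16384

noncomputable def Up (x : ℝ) : ℝ := 10 * Vp x - 3

noncomputable def Wp (x : ℝ) : ℝ :=
  285/32768 + 699/524288*x + 2175/8388608*x^2 + 1875/268435456*x^3

lemma central_le (n : ℕ) : Nat.choose (2*n) n ≤ 4^n := by
  cases n with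
  | zero => simp
  | succ m =>
      have h1 : (2*(m+1)).choose (m+1) ≤ (2*(m+1)+1).choose (m+1) := by
        rw [Nat.choose_succ_succ]
        exact Nat.le_add_left _ _
      exact h1.trans (Nat.choose_middle_le_pow (m+1))

lemma acoef_le_one (n : ℕ) :
    ((1 / (2 * (n : ℝ) - 1)) * (1 / 4 ^ n) * (Nat.choose (2 * n) n)) ^ 2 ≤ 1 := by
  set c : ℝ := (1 / (2 * (n : ℝ) - 1)) * (1 / 4 ^ n) * (Nat.choose (2 * n) n) with hc
  have hden : (1:ℝ) ≤ |2 * (n : ℝ) - 1| := by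
    cases n with
    | zero => norm_num
    | succ m =>
        rw [abs_of_pos (by push_cast; linarith)]
        push_cast; linarith
  have h1 : |1 / (2 * (n : ℝ) - 1)| ≤ 1 := by
    rw [abs_div, abs_one, div_le_one (by linarith)]
    exact hden
  have h3 : (1 / 4 ^ n : ℝ) * (Nat.choose (2 * n) n) ≤ 1 := by
    rw [one_div, inv_mul_le_iff₀ (by positivity), mul_one]
    exact_mod_cast central_le n
  have h2 : (0:ℝ) ≤ (1 / 4 ^ n) * (Nat.choose (2 * n) n) := by positivity
  have habs : |c| ≤ 1 := by
    rw [hc, mul_assoc, abs_mul, abs_of_nonneg h2]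
    calc |1 / (2 * (n : ℝ) - 1)| * (1 / 4 ^ n * (Nat.choose (2 * n) n))
        ≤ 1 * 1 := mul_le_mul h1 h3 h2 zero_le_one
      _ = 1 := by norm_num
  nlinarith [sq_abs c, abs_nonneg c]

lemma bfun_tail (x : ℝ) (hx0 : 0 < x) (hx : x ≤ 1/2) :
    0 ≤ Bfun x - P4 x - 49/65536 * x^5 ∧ Bfun x - P4 x - 49/65536 * x^5 ≤ 2 * x^6 := by
  set f : ℕ → ℝ := fun n =>
    ((1 / (2 * (n : ℝ) - 1)) * (1 / 4 ^ n) * (Nat.choose (2 * n) n)) ^ 2 * x ^ n with hf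
  have hnn : ∀ n, 0 ≤ f n := fun n => mul_nonneg (sq_nonneg _) (pow_nonneg hx0.le n)
  have hle : ∀ n, f n ≤ x ^ n := fun n => by
    calc f n ≤ 1 * x ^ n := mul_le_mul_of_nonneg_right (acoef_le_one n) (pow_nonneg hx0.le n)
      _ = x ^ n := one_mul _
  have hxlt : x < 1 := by linarith
  have hgeo : Summable (fun n : ℕ => x ^ n) := summable_geometric_of_lt_one hx0.le hxlt
  have hsum : Summable f := Summable.of_nonneg_of_le hnn hle hgeo
  have hsplit : (∑ i ∈ Finset.range 6, f i) + ∑' i, f (i + 6) = ∑' i, f i :=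
    Summable.sum_add_tsum_nat_add 6 hsum
  have hBfun : Bfun x = ∑' i, f i := rfl
  have hsum6 : ∑ i ∈ Finset.range 6, f i = P4 x + 49/65536 * x^5 := by
    simp only [hf, Finset.sum_range_succ, Finset.sum_range_zero, P4]
    norm_num [Nat.choose]
    ring
  have htail_nonneg : 0 ≤ ∑' i, f (i + 6) := tsum_nonneg (fun i => hnn _)
  have htail_le : ∑' i, f (i + 6) ≤ ∑' i : ℕ, x ^ (i + 6) := by
    refine Summable.tsum_le_tsum (fun i => hle (i + 6)) ((summable_nat_add_iff 6).mpr hsum)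
      ((summable_nat_add_iff 6).mpr hgeo)
  have hgeosum : ∑' i : ℕ, x ^ (i + 6) = x^6 * (1 - x)⁻¹ := by
    have : ∀ i : ℕ, x ^ (i + 6) = x^6 * x^i := fun i => by rw [pow_add]; ring
    rw [tsum_congr this, tsum_mul_left, tsum_geometric_of_lt_one hx0.le hxlt]
  have hinv : (1 - x)⁻¹ ≤ 2 := by
    rw [inv_le_comm₀ (by linarith) (by norm_num)]
    linarith
  have htail_le2 : ∑' i, f (i + 6) ≤ 2 * x^6 := by
    calc ∑' i, f (i + 6) ≤ x^6 * (1 - x)⁻¹ := by rw [← hgeosum]; exact htail_le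
      _ ≤ x^6 * 2 := mul_le_mul_of_nonneg_left hinv (by positivity)
      _ = 2 * x^6 := by ring
  constructor
  · rw [hBfun, ← hsplit, hsum6]; linarith
  · rw [hBfun, ← hsplit, hsum6]; linarith

lemma sqrt_four : Real.sqrt 4 = 2 := by
  rw [show (4:ℝ) = 2^2 by norm_num, Real.sqrt_sq (by norm_num)]

lemma partB_identity (x : ℝ) (hx0 : 0 < x) (hx1 : x < 1) :
    (P4 x - Afun x) / x^5 =
      Wp x / ((10 + Real.sqrt (4 - 3*x)) * (Up x - Vp x * Real.sqrt (4 - 3*x))) := by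
  set s := Real.sqrt (4 - 3*x) with hs
  have hs2 : s^2 = 4 - 3*x := Real.sq_sqrt (by linarith)
  have hs_nonneg : 0 ≤ s := Real.sqrt_nonneg _
  have hs_pos : 0 < s := by nlinarith
  have h10 : (0:ℝ) < 10 + s := by linarith
  have hVpos : 0 < Vp x := by unfold Vp; positivity
  have hUneg : Up x < 0 := by unfold Up Vp; nlinarith
  have hden : Up x - Vp x * s < 0 := by nlinarith
  have h1 : P4 x - Afun x = x * (Up x + Vp x * s) / (10 + s) := by
    unfold P4 Afun Up Vp
    rw [← hs]
    field_simp
    ring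
  have h2 : (Up x + Vp x * s) * (Up x - Vp x * s) = x^4 * Wp x := by
    unfold Up Vp Wp
    linear_combination (-(1/4 + x/64 + x^2/256 + 25*x^3/16384)^2) * hs2
  have h3 : P4 x - Afun x = x^5 * Wp x / ((10 + s) * (Up x - Vp x * s)) := by
    rw [h1, div_eq_div_iff (by positivity) (by nlinarith)]
    linear_combination (x * (10 + s)) * h2
  rw [h3, div_div, mul_comm ((10 + s) * (Up x - Vp x * s)) (x ^ 5), ← div_div,
    mul_comm (x ^ 5) (Wp x), mul_div_assoc,
    div_self (by positivity : (x : ℝ) ^ 5 ≠ 0), mul_one]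

lemma partB : Tendsto (fun x : ℝ => (P4 x - Afun x) / x ^ 5) (nhdsWithin 0 (Set.Ioi 0))
    (nhds (-(95/131072))) := by
  have hG : Tendsto (fun x : ℝ =>
      Wp x / ((10 + Real.sqrt (4 - 3*x)) * (Up x - Vp x * Real.sqrt (4 - 3*x))))
      (nhdsWithin 0 (Set.Ioi 0)) (nhds (-(95/131072))) := by
    have hc : ContinuousAt (fun x : ℝ =>
        Wp x / ((10 + Real.sqrt (4 - 3*x)) * (Up x - Vp x * Real.sqrt (4 - 3*x)))) 0 := by
      apply ContinuousAt.div
      · unfold Wp; fun_prop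
      · unfold Up Vp; fun_prop
      · norm_num [Up, Vp, sqrt_four]
    have h := hc.tendsto.mono_left (nhdsWithin_le_nhds (s := Set.Ioi (0:ℝ)))
    convert h using 2
    norm_num [Up, Vp, Wp, sqrt_four]
  refine hG.congr' ?_
  filter_upwards [self_mem_nhdsWithin,
    (eventually_lt_nhds (show (0:ℝ) < 1 by norm_num)).filter_mono nhdsWithin_le_nhds]
    with x hx hx1
  exact (partB_identity x hx hx1).symm

lemma partA : Tendsto (fun x : ℝ => (Bfun x - P4 x) / x ^ 5) (nhdsWithin 0 (Set.Ioi 0))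
    (nhds (49/65536)) := by
  rw [← tendsto_sub_nhds_zero_iff]
  apply squeeze_zero_norm' (a := fun x : ℝ => 2 * x)
  · filter_upwards [self_mem_nhdsWithin,
      (eventually_le_nhds (show (0:ℝ) < 1/2 by norm_num)).filter_mono nhdsWithin_le_nhds]
      with x hx hx2
    have hx0 : 0 < x := hx
    obtain ⟨h1, h2⟩ := bfun_tail x hx0 hx2
    have h5 : (0:ℝ) < x^5 := by positivity
    have key : (Bfun x - P4 x) / x ^ 5 - 49/65536 = (Bfun x - P4 x - 49/65536 * x^5) / x^5 := by
      field_simp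
    rw [Real.norm_eq_abs, key, abs_div, abs_of_pos h5,
      abs_of_nonneg h1, div_le_iff₀ h5]
    calc Bfun x - P4 x - 49/65536 * x^5 ≤ 2 * x^6 := h2
      _ = 2 * x * x^5 := by ring
  · have h : Tendsto (fun x : ℝ => 2 * x) (nhds (0:ℝ)) (nhds (0:ℝ)) := by
      have h2 := ((continuous_const (y := (2:ℝ))).mul (continuous_id : Continuous fun x : ℝ => x)).tendsto 0
      convert h2 using 2 <;> simp
    exact h.mono_left nhdsWithin_le_nhds

theorem theta_limit_and_optimality :
    Tendsto (fun x : ℝ => (Bfun x - Afun x) / x ^ 5) (nhdsWithin 0 (Set.Ioi 0))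
        (nhds (3 / 2 ^ 17)) ∧
      ∀ c : ℝ, (∀ x : ℝ, 0 < x → x ≤ 1 → c * x ^ 5 < Bfun x - Afun x) → c ≤ 3 / 2 ^ 17 := by
  have first : Tendsto (fun x : ℝ => (Bfun x - Afun x) / x ^ 5) (nhdsWithin 0 (Set.Ioi 0))
      (nhds (3 / 2 ^ 17)) := by
    have h := partA.add partB
    have heq : (fun x : ℝ => (Bfun x - P4 x) / x ^ 5 + (P4 x - Afun x) / x ^ 5) =
        fun x : ℝ => (Bfun x - Afun x) / x ^ 5 := by
      funext x
      rw [← add_div]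
      ring_nf
    rw [heq] at h
    convert h using 2
    norm_num
  refine ⟨first, fun c hc => ?_⟩
  by_contra hgt
  push_neg at hgt
  have hev : ∀ᶠ x in nhdsWithin (0:ℝ) (Set.Ioi 0),
      (Bfun x - Afun x) / x ^ 5 < c := first.eventually_lt_const hgt
  have hall : ∀ᶠ x in nhdsWithin (0:ℝ) (Set.Ioi 0),
      (Bfun x - Afun x) / x ^ 5 < c ∧ 0 < x ∧ x ≤ 1 := by
    filter_upwards [hev, self_mem_nhdsWithin,
      (eventually_le_nhds (show (0:ℝ) < 1 by norm_num)).filter_mono nhdsWithin_le_nhds]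
      with x h1 h2 h3
    exact ⟨h1, h2, h3⟩
  obtain ⟨x, hlt, hx0, hx1⟩ := hall.exists
  have h5 : (0:ℝ) < x ^ 5 := by positivity
  have := hc x hx0 hx1
  rw [div_lt_iff₀ h5] at hlt
  linarith
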